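/- arXiv:2406.15263 — 2 statements merged into one kernel-verified Lean document; each statement's English description precedes it below -/
import Mathlib

section
/- Let λ be an infinite cardinal with λ⁺ < 2^λ. Then there exists a tree T with at most λ nodes and at most λ levels (i.e., of height κ ≤ λ) that has at least λ⁺⁺ branches of length equal to its height. -/
universe u

open Cardinal

/-- If `λ` is infinite and `λ⁺ < 2^λ`, then there is a cardinal `κ ≤ λ` and a
tree `T` of binary sequences of length `< κ` (closed under initial segments) with at most `λ`
nodes that has at least `λ⁺⁺` branches of length `κ`. -/
theorem stmt0 (lam : Cardinal.{u}) (hinf : ℵ₀ ≤ lam)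
    (hlt : Order.succ lam < 2 ^ lam) :
    ∃ κ : Cardinal.{u}, κ ≤ lam ∧
      ∃ T : Set ((i : κ.ord.ToType) × (Set.Iio i → Bool)),
        #↥T ≤ lam ∧
        (∀ s ∈ T, ∀ j, ∀ hj : j < s.1,
          (⟨j, fun x => s.2 ⟨x.1, x.2.trans hj⟩⟩ : (i : κ.ord.ToType) × (Set.Iio i → Bool)) ∈ T) ∧
        Order.succ (Order.succ lam) ≤
          #{η : κ.ord.ToType → Bool |
            ∀ i, (⟨i, fun x => η x.1⟩ : (i : κ.ord.ToType) × (Set.Iio i → Bool)) ∈ T} := by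
  classical
  have h2 : Order.succ (Order.succ lam) ≤ 2 ^ lam := Order.succ_le_of_lt hlt
  set S : Set Cardinal.{u} := {c | Order.succ (Order.succ lam) ≤ 2 ^ c} with hSdef
  have hlamS : lam ∈ S := h2
  set ν : Cardinal.{u} := sInf S with hνdef
  have hνlam : ν ≤ lam := csInf_le' hlamS
  have hνS : ν ∈ S := csInf_mem ⟨lam, hlamS⟩
  have hsmall : ∀ σ : Cardinal.{u}, σ < ν → 2 ^ σ ≤ Order.succ lam := by
    intro σ hσ
    by_contra h
    exact hσ.not_ge (csInf_le' (Order.succ_le_of_lt (lt_of_not_ge h)))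
  have hO : #ν.ord.ToType = ν := by rw [Cardinal.mk_toType, Cardinal.card_ord]
  have hW : #(Order.succ lam).ord.ToType = Order.succ lam := by
    rw [Cardinal.mk_toType, Cardinal.card_ord]
  have hWne : Nonempty (Order.succ lam).ord.ToType := by
    refine Ordinal.nonempty_toType_iff.2 ?_
    rw [Ne, Cardinal.ord_eq_zero]
    exact ne_of_gt (lt_of_le_of_lt (zero_le (a := lam)) (Order.lt_succ lam))
  -- functions to Bool have cardinality 2 ^ _
  have harrow : ∀ (α : Type u), #(α → Bool) = 2 ^ #α := by
    intro α
    rw [Cardinal.mk_arrow, Cardinal.mk_bool, Cardinal.lift_two, Cardinal.lift_uzero]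
  -- injections from nodes at level j into W
  have hpow : ∀ j : ν.ord.ToType, #(Set.Iio j → Bool) ≤ #(Order.succ lam).ord.ToType := by
    intro j
    rw [hW, harrow]
    exact hsmall _ (Cardinal.mk_Iio_ord_toType j)
  have he : ∀ j : ν.ord.ToType,
      ∃ f : (Set.Iio j → Bool) ↪ (Order.succ lam).ord.ToType, True :=
    fun j => ⟨Classical.choice ((Cardinal.le_def _ _).1 (hpow j)), trivial⟩
  choose e _ using he
  set g : (ν.ord.ToType → Bool) → ν.ord.ToType → (Order.succ lam).ord.ToType :=
    fun η j => e j (fun x => η x.1) with hgdef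
  -- every η has its codes bounded in W
  have hbound : ∀ η : ν.ord.ToType → Bool,
      ∃ w : (Order.succ lam).ord.ToType, ∀ j : ν.ord.ToType, g η j ≤ w := by
    intro η
    by_contra h
    push_neg at h
    have hub : IsCofinal (Set.range (g η)) := by
      intro w
      obtain ⟨j, hj⟩ := h w
      exact ⟨g η j, ⟨j, rfl⟩, hj.le⟩
    haveI hwo : IsWellOrder (Order.succ lam).ord.ToType (· < ·) := isWellOrder_lt
    have hc := Order.cof_le hub
    rw [Ordinal.cof_toType] at hc
    have hreg : Order.succ lam ≤ ((Order.succ lam).ord).cof :=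
      (Cardinal.isRegular_succ hinf).2
    have : Order.succ lam ≤ lam :=
      hreg.trans (hc.trans (Cardinal.mk_range_le.trans (by rw [hO]; exact hνlam)))
    exact (Order.lt_succ lam).not_ge this
  set F : (Order.succ lam).ord.ToType → Set (ν.ord.ToType → Bool) :=
    fun w => {η | ∀ j : ν.ord.ToType, g η j ≤ w} with hFdef
  -- some F w is large
  have hbig : ∃ w : (Order.succ lam).ord.ToType, Order.succ (Order.succ lam) ≤ #(F w) := by
    by_contra h
    push_neg at h
    have h1 : ∀ w : (Order.succ lam).ord.ToType, #(F w) ≤ Order.succ lam :=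
      fun w => Order.lt_succ_iff.1 (h w)
    have hcover : (⋃ w : (Order.succ lam).ord.ToType, F w) = Set.univ := by
      ext η
      simp only [Set.mem_iUnion, Set.mem_univ, iff_true]
      obtain ⟨w, hw⟩ := hbound η
      exact ⟨w, hw⟩
    have hun : #(⋃ w : (Order.succ lam).ord.ToType, F w) ≤
        #(Order.succ lam).ord.ToType * ⨆ w : (Order.succ lam).ord.ToType, #(F w) :=
      Cardinal.mk_iUnion_le _
    have hsup : (⨆ w : (Order.succ lam).ord.ToType, #(F w)) ≤ Order.succ lam := ciSup_le' h1
    have hle : (2 : Cardinal.{u}) ^ ν ≤ Order.succ lam := by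
      calc (2 : Cardinal.{u}) ^ ν = #(ν.ord.ToType → Bool) := by rw [harrow, hO]
        _ = #(⋃ w : (Order.succ lam).ord.ToType, F w) := by rw [hcover, Cardinal.mk_univ]
        _ ≤ #(Order.succ lam).ord.ToType *
              ⨆ w : (Order.succ lam).ord.ToType, #(F w) := hun
        _ ≤ Order.succ lam * Order.succ lam := by
            rw [hW]; exact mul_le_mul' le_rfl hsup
        _ = Order.succ lam :=
            Cardinal.mul_eq_self (hinf.trans (Order.le_succ lam))
    have : Order.succ (Order.succ lam) ≤ Order.succ lam := le_trans hνS hle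
    exact (Order.lt_succ (Order.succ lam)).not_ge this
  obtain ⟨w, hw⟩ := hbig
  refine ⟨ν, hνlam, {s | ∃ η ∈ F w, ∀ x : Set.Iio s.1, s.2 x = η x.1}, ?_, ?_, ?_⟩
  · -- few nodes
    have hIic : #(Set.Iic w) ≤ lam := by
      rw [← Set.Iio_insert]
      refine Cardinal.mk_insert_le.trans ?_
      have h1 : #(Set.Iio w) ≤ lam :=
        Order.lt_succ_iff.1 (Cardinal.mk_Iio_ord_toType w)
      calc #(Set.Iio w) + 1 ≤ lam + 1 := add_le_add_left h1 1
        _ = lam := Cardinal.add_one_of_aleph0_le hinf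
    have hinj : ∃ f : {s : (i : ν.ord.ToType) × (Set.Iio i → Bool) // ∃ η ∈ F w,
        ∀ x : Set.Iio s.1, s.2 x = η x.1} → ν.ord.ToType × Set.Iic w, Function.Injective f := by
      refine ⟨fun s => ⟨s.1.1, ⟨e s.1.1 s.1.2, ?_⟩⟩, ?_⟩
      · obtain ⟨η, hη, hext⟩ := s.2
        have hfe : s.1.2 = fun x => η x.1 := funext hext
        rw [hfe]
        exact hη s.1.1
      · rintro ⟨⟨j1, f1⟩, hs1⟩ ⟨⟨j2, f2⟩, hs2⟩ hab
        simp only [Prod.mk.injEq, Subtype.mk.injEq] at hab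
        obtain ⟨hj, hf⟩ := hab
        subst hj
        have : f1 = f2 := (e j1).injective hf
        subst this
        rfl
    obtain ⟨f, hf⟩ := hinj
    refine (Cardinal.mk_le_of_injective hf).trans ?_
    calc #(ν.ord.ToType × Set.Iic w) = #ν.ord.ToType * #(Set.Iic w) := by
          rw [Cardinal.mk_prod, Cardinal.lift_id, Cardinal.lift_id]
      _ ≤ lam * lam := mul_le_mul' (by rw [hO]; exact hνlam) hIic
      _ = lam := Cardinal.mul_eq_self hinf
  · -- closure under initial segments
    rintro s ⟨η, hη, hext⟩ j hj
    exact ⟨η, hη, fun x => hext ⟨x.1, x.2.trans hj⟩⟩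
  · -- many branches
    refine hw.trans (Cardinal.mk_le_mk_of_subset ?_)
    intro η hη i
    exact ⟨η, hη, fun x => rfl⟩
end

section
/- Suppose Φ²_{λ⁺}(λ⁺) holds for an infinite cardinal λ. Then there exist pairwise disjoint stationary sets S_α ⊆ λ⁺ for α < λ⁺ such that Φ²_{λ⁺}(S_α) holds for every α < λ⁺. -/
universe u

open Cardinal

namespace WD

/-- `C` is closed and unbounded in the ordinal `Λ`. -/
def ClubIn (C : Set Ordinal.{u}) (Λ : Ordinal.{u}) : Prop :=
  (∀ x ∈ C, x < Λ) ∧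
  (∀ α < Λ, ∃ β ∈ C, α ≤ β) ∧
  (∀ S : Set Ordinal.{u}, S ⊆ C → S.Nonempty → BddAbove S → sSup S < Λ → sSup S ∈ C)

/-- `S` is stationary in the ordinal `Λ`: it meets every club of `Λ`. -/
def StatIn (S : Set Ordinal.{u}) (Λ : Ordinal.{u}) : Prop :=
  ∀ C : Set Ordinal.{u}, ClubIn C Λ → (S ∩ C).Nonempty

/-- The ordinals below `λ⁺`. -/
def Tower (lam : Cardinal.{u}) : Type (u + 1) :=
  {α : Ordinal.{u} // α < (Order.succ lam).ord}

/-- A set of size `2^λ` (realized as the ordinals below `(2^λ).ord`). -/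
def Target (lam : Cardinal.{u}) : Type (u + 1) :=
  {β : Ordinal.{u} // β < ((2 : Cardinal.{u}) ^ lam).ord}

/-- The elements of `^{<λ⁺}(2^λ)`: functions from a proper initial segment of `λ⁺`
into `2^λ`. -/
def PSeq (lam : Cardinal.{u}) : Type (u + 1) :=
  (α : Tower lam) × ({β : Ordinal.{u} // β < α.1} → Target lam)

/-- The restriction `f ↾ α` of `f : λ⁺ → 2^λ` to `α < λ⁺`. -/
def restr (lam : Cardinal.{u}) (f : Tower lam → Target lam) (α : Tower lam) : PSeq lam :=
  ⟨α, fun β => f ⟨β.1, β.2.trans α.2⟩⟩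

/-- The weak diamond principle `Φ^k_{λ⁺}(S)` of Devlin–Shelah: for every
`F : ^{<λ⁺}(2^λ) → k` there is `g : λ⁺ → k` such that for every `f : λ⁺ → 2^λ` the set
`{α ∈ S : F(f ↾ α) = g(α)}` is stationary in `λ⁺`. -/
def WeakDiamond (lam : Cardinal.{u}) (k : ℕ) (S : Set Ordinal.{u}) : Prop :=
  ∀ F : PSeq lam → Fin k, ∃ g : Tower lam → Fin k,
    ∀ f : Tower lam → Target lam,
      StatIn {α : Ordinal.{u} | ∃ hα : α < (Order.succ lam).ord,
          α ∈ S ∧ F (restr lam f ⟨α, hα⟩) = g ⟨α, hα⟩}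
        (Order.succ lam).ord

end WD

namespace WD

variable {lam : Cardinal.{u}}

lemma statIn_mono {S T : Set Ordinal.{u}} {o : Ordinal.{u}} (h : S ⊆ T) (hS : StatIn S o) :
    StatIn T o := fun C hC => ((hS C hC).imp fun _ hx => ⟨h hx.1, hx.2⟩)

lemma target_nonempty (lam : Cardinal.{u}) : Nonempty (Target lam) := by
  refine ⟨⟨0, ?_⟩⟩
  rw [Cardinal.lt_ord]
  simpa using Cardinal.power_pos lam two_pos

lemma wd_mono {S T : Set Ordinal.{u}} (h : S ⊆ T) (hS : WeakDiamond lam 2 S) :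
    WeakDiamond lam 2 T := by
  intro F
  obtain ⟨g, hg⟩ := hS F
  exact ⟨g, fun f => statIn_mono (fun α hα => ⟨hα.1, h hα.2.1, hα.2.2⟩) (hg f)⟩

lemma wd_statIn {S : Set Ordinal.{u}} (hS : WeakDiamond lam 2 S) :
    StatIn S (Order.succ lam).ord := by
  obtain ⟨g, hg⟩ := hS (fun _ => 0)
  have := hg (fun _ => Classical.choice (target_nonempty lam))
  exact statIn_mono (fun α hα => hα.2.1) this


lemma isLimit_Lam (hinf : ℵ₀ ≤ lam) : Order.IsSuccLimit ((Order.succ lam).ord) :=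
  Cardinal.isSuccLimit_ord (hinf.trans (Order.le_succ lam))

lemma clubIn_rest (hinf : ℵ₀ ≤ lam) {α : Ordinal.{u}} (hα : α < (Order.succ lam).ord) :
    ClubIn {β : Ordinal.{u} | α < β ∧ β < (Order.succ lam).ord} (Order.succ lam).ord := by
  refine ⟨fun x hx => hx.2, ?_, ?_⟩
  · intro γ hγ
    have h1 : α < α + 1 := lt_add_one α
    have h2 : α + 1 < (Order.succ lam).ord := by
      rw [Ordinal.add_one_eq_succ]
      exact (isLimit_Lam hinf).succ_lt hα
    exact ⟨max γ (α + 1), ⟨h1.trans_le (le_max_right _ _), max_lt hγ h2⟩, le_max_left _ _⟩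
  · intro S hS hne hbdd hlt
    obtain ⟨x, hx⟩ := hne
    exact ⟨(hS hx).1.trans_le (le_csSup hbdd hx), hlt⟩

lemma iInter_club (hinf : ℵ₀ ≤ lam) (C : lam.ord.ToType → Set Ordinal.{u})
    (hC : ∀ i, ClubIn (C i) (Order.succ lam).ord) :
    ClubIn (⋂ i, C i) (Order.succ lam).ord := by
  have hne : Nonempty lam.ord.ToType := by
    rw [Ordinal.toType_nonempty_iff_ne_zero]
    intro h0
    have : (0 : Ordinal.{u}) < lam.ord := by
      rw [Cardinal.lt_ord, Ordinal.card_zero]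
      exact aleph0_pos.trans_le hinf
    exact this.ne' h0
  have hcof : ((Order.succ lam).ord).cof = Order.succ lam := (Cardinal.isRegular_succ hinf).cof_eq
  have hmkι : #(lam.ord.ToType) = lam := by rw [Cardinal.mk_toType, Cardinal.card_ord]
  have hιcof : #(lam.ord.ToType) < ((Order.succ lam).ord).cof := by
    rw [hcof, hmkι]; exact Order.lt_succ lam
  choose pick hpickC hpickLe using fun i => (hC i).2.1
  set next : Ordinal.{u} → Ordinal.{u} := fun γ =>
    if h : γ < (Order.succ lam).ord then (⨆ i, pick i γ h) + 1 else 0 with hnext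
  have hsuplt : ∀ γ (h : γ < (Order.succ lam).ord),
      (⨆ i, pick i γ h) < (Order.succ lam).ord :=
    fun γ h => Ordinal.iSup_lt_ord hιcof (fun i => (hC i).1 _ (hpickC i γ h))
  have hnextlt : ∀ γ, γ < (Order.succ lam).ord → next γ < (Order.succ lam).ord := by
    intro γ h
    rw [hnext]
    simp only [dif_pos h]
    rw [Ordinal.add_one_eq_succ]
    exact (isLimit_Lam hinf).succ_lt (hsuplt γ h)
  have hpick_lt_next : ∀ γ (h : γ < (Order.succ lam).ord) i, pick i γ h < next γ := by
    intro γ h i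
    rw [hnext]
    simp only [dif_pos h]
    exact (le_ciSup (Ordinal.bddAbove_range _) i).trans_lt (lt_add_one _)
  have hnextgt : ∀ γ (h : γ < (Order.succ lam).ord), γ < next γ := by
    intro γ h
    exact (hpickLe (Classical.arbitrary _) γ h).trans_lt (hpick_lt_next γ h _)
  constructor
  · intro x hx
    exact (hC (Classical.arbitrary _)).1 x (Set.mem_iInter.1 hx _)
  constructor
  · -- unboundedness
    intro α hα
    set seq : ℕ → Ordinal.{u} := fun n => Nat.rec α (fun _ ih => next ih) n with hseq
    have hseqlt : ∀ n, seq n < (Order.succ lam).ord := by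
      intro n; induction n with
      | zero => exact hα
      | succ n ih => exact hnextlt _ ih
    have hseqmono : ∀ n, seq n < seq (n + 1) := fun n => hnextgt _ (hseqlt n)
    set δ : Ordinal.{u} := ⨆ n, seq n with hδ
    have hδlt : δ < (Order.succ lam).ord := by
      apply Ordinal.iSup_lt_ord_lift _ hseqlt
      rw [hcof, Cardinal.mk_nat, Cardinal.lift_aleph0]
      exact hinf.trans_lt (Order.lt_succ lam)
    have hseqle : ∀ n, seq n ≤ δ := fun n => le_ciSup (Ordinal.bddAbove_range _) n
    refine ⟨δ, Set.mem_iInter.2 fun i => ?_, (hseqle 0)⟩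
    -- δ ∈ C i
    set D : Set Ordinal.{u} := Set.range (fun n => pick i (seq n) (hseqlt n)) with hD
    have hDsub : D ⊆ C i := by rintro x ⟨n, rfl⟩; exact hpickC i _ _
    have hDsup : sSup D = δ := by
      apply le_antisymm
      · apply csSup_le (Set.range_nonempty _)
        rintro x ⟨n, rfl⟩
        exact (hpick_lt_next _ _ i).le.trans (hseqle (n + 1))
      · exact ciSup_le fun n =>
          (hpickLe i _ (hseqlt n)).trans (le_csSup (Ordinal.bddAbove_range _) ⟨n, rfl⟩)
    have := (hC i).2.2 D hDsub (Set.range_nonempty _) (Ordinal.bddAbove_range _) (hDsup ▸ hδlt)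
    rwa [hDsup] at this
  · intro S hS hne hbdd hlt
    refine Set.mem_iInter.2 fun i => (hC i).2.2 S (fun x hx => Set.mem_iInter.1 (hS hx) i) hne hbdd hlt


lemma toType_ne (hinf : ℵ₀ ≤ lam) : Nonempty lam.ord.ToType := by
  rw [Ordinal.toType_nonempty_iff_ne_zero]
  intro h0
  have : (0 : Ordinal.{u}) < lam.ord := by
    rw [Cardinal.lt_ord, Ordinal.card_zero]
    exact aleph0_pos.trans_le hinf
  exact this.ne' h0

lemma not_statIn_iUnion (hinf : ℵ₀ ≤ lam) (B : lam.ord.ToType → Set Ordinal.{u})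
    (hB : ∀ i, ¬ StatIn (B i) (Order.succ lam).ord) :
    ¬ StatIn (⋃ i, B i) (Order.succ lam).ord := by
  have hB' : ∀ i, ∃ C, ClubIn C (Order.succ lam).ord ∧ B i ∩ C = ∅ := by
    intro i
    have := hB i
    rw [StatIn] at this
    push_neg at this
    obtain ⟨C, hC1, hC2⟩ := this
    exact ⟨C, hC1, hC2⟩
  choose C hC hCB using hB'
  intro hstat
  obtain ⟨x, hx1, hx2⟩ := hstat (⋂ i, C i) (iInter_club hinf C hC)
  obtain ⟨i, hi⟩ := Set.mem_iUnion.1 hx1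
  exact Set.eq_empty_iff_forall_notMem.1 (hCB i) x ⟨hi, Set.mem_iInter.1 hx2 i⟩

lemma mk_target (lam : Cardinal.{u}) : #(Target lam) = Cardinal.lift.{u + 1} (2 ^ lam) := by
  have : #(Target lam) = #(Set.Iio ((2 : Cardinal.{u}) ^ lam).ord) := rfl
  rw [this, Ordinal.mk_Iio_ordinal, Cardinal.card_ord]

lemma target_equiv (hinf : ℵ₀ ≤ lam) :
    Nonempty (Target lam ≃ (lam.ord.ToType → Target lam)) := by
  rw [← Cardinal.eq, mk_target]
  rw [Cardinal.mk_arrow, Cardinal.mk_toType, Cardinal.card_ord, mk_target]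
  simp only [Cardinal.lift_lift, Cardinal.lift_id']
  rw [← Cardinal.lift_power, ← Cardinal.power_mul, Cardinal.mul_eq_self hinf]

lemma wd_iUnion (hinf : ℵ₀ ≤ lam) (S : lam.ord.ToType → Set Ordinal.{u})
    (h : WeakDiamond lam 2 (⋃ i, S i)) : ∃ i, WeakDiamond lam 2 (S i) := by
  by_contra hno
  push_neg at hno
  have hno' : ∀ i, ∃ F : PSeq lam → Fin 2, ∀ g : Tower lam → Fin 2,
      ∃ f : Tower lam → Target lam, ¬ StatIn {α : Ordinal.{u} | ∃ hα : α < (Order.succ lam).ord,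
        α ∈ S i ∧ F (restr lam f ⟨α, hα⟩) = g ⟨α, hα⟩} (Order.succ lam).ord := by
    intro i
    have := hno i
    unfold WeakDiamond at this
    push_neg at this
    exact this
  choose Fc hFc using hno'
  have hne : Nonempty lam.ord.ToType := toType_ne hinf
  obtain ⟨E⟩ := target_equiv (lam := lam) hinf
  classical
  set sel : Ordinal.{u} → lam.ord.ToType := fun β =>
    if h : ∃ i, β ∈ S i then h.choose else Classical.arbitrary _ with hsel
  set Fm : PSeq lam → Fin 2 := fun p => Fc (sel p.1.1) ⟨p.1, fun b => E (p.2 b) (sel p.1.1)⟩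
    with hFm
  obtain ⟨g, hg⟩ := h Fm
  choose f hf using fun i => hFc i g
  set fm : Tower lam → Target lam := fun b => E.symm (fun i => f i b) with hfm
  have hstat := hg fm
  apply not_statIn_iUnion hinf (fun i => {α : Ordinal.{u} | ∃ hα : α < (Order.succ lam).ord,
      α ∈ S i ∧ Fc i (restr lam (f i) ⟨α, hα⟩) = g ⟨α, hα⟩}) hf
  apply statIn_mono _ hstat
  rintro α ⟨hα, hmem, heq⟩
  have hex : ∃ i, α ∈ S i := Set.mem_iUnion.1 hmem
  have hjmem : α ∈ S (sel α) := by
    rw [hsel]; simp only [dif_pos hex]; exact hex.choose_spec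
  refine Set.mem_iUnion.2 ⟨sel α, hα, hjmem, ?_⟩
  rw [← heq]
  have harg : ∀ b : {β : Ordinal.{u} // β < α},
      E (fm ⟨b.1, b.2.trans hα⟩) (sel α) = f (sel α) ⟨b.1, b.2.trans hα⟩ := fun b => by
    rw [hfm]; exact congrFun (E.apply_symm_apply _) (sel α)
  show Fc (sel α) (restr lam (f (sel α)) ⟨α, hα⟩) = Fm (restr lam fm ⟨α, hα⟩)
  have : Fm (restr lam fm ⟨α, hα⟩)
      = Fc (sel α) ⟨⟨α, hα⟩, fun b => E (fm ⟨b.1, b.2.trans hα⟩) (sel α)⟩ := rfl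
  rw [this]; unfold restr
  exact congrArg _ (congrArg _ (funext fun b => (harg b).symm))


lemma mk_tower (lam : Cardinal.{u}) :
    #(Tower lam) = Cardinal.lift.{u + 1} (Order.succ lam) := by
  have : #(Tower lam) = #(Set.Iio (Order.succ lam).ord) := rfl
  rw [this, Ordinal.mk_Iio_ordinal, Cardinal.card_ord]

lemma iio_emb (hinf : ℵ₀ ≤ lam) {β : Ordinal.{u}} (hβ : β < (Order.succ lam).ord) :
    Nonempty (Set.Iio β ↪ lam.ord.ToType) := by
  have h1 : β.card ≤ lam := Order.lt_succ_iff.1 (Cardinal.lt_ord.1 hβ)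
  refine Cardinal.lift_mk_le'.1 ?_
  rw [Ordinal.mk_Iio_ordinal, Cardinal.mk_toType, Cardinal.card_ord]
  simp only [Cardinal.lift_lift]
  exact Cardinal.lift_le.2 h1

lemma pigeon (hinf : ℵ₀ ≤ lam) (ξf : Tower lam → lam.ord.ToType) :
    ∃ ξ, Nonempty (Tower lam ↪ {t : Tower lam // ξf t = ξ}) := by
  by_contra hno
  push_neg at hno
  have hfib : ∀ ξ, #{t : Tower lam // ξf t = ξ} ≤ Cardinal.lift.{u + 1} lam := by
    intro ξ
    by_contra hgt
    push_neg at hgt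
    refine (not_isEmpty_iff.2 ((Cardinal.le_def _ _).1 ?_)) (hno ξ)
    rw [mk_tower, Cardinal.lift_succ]
    exact Order.succ_le_of_lt hgt
  have h1 : #(Tower lam) = Cardinal.sum (fun ξ => #{t : Tower lam // ξf t = ξ}) := by
    rw [← Cardinal.mk_sigma]
    exact Cardinal.mk_congr (Equiv.sigmaFiberEquiv ξf).symm
  have h2 := Cardinal.sum_le_sum _ (fun _ : lam.ord.ToType => Cardinal.lift.{u + 1} lam) hfib
  rw [Cardinal.sum_const, Cardinal.mk_toType, Cardinal.card_ord] at h2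
  rw [mk_tower] at h1
  have h3 : Cardinal.lift.{u + 1} (Order.succ lam) ≤ Cardinal.lift.{u + 1} lam := by
    calc Cardinal.lift.{u + 1} (Order.succ lam) ≤ _ := h1.le.trans h2
    _ = Cardinal.lift.{u + 1} (lam * lam) := by
        simp only [Cardinal.lift_lift, Cardinal.lift_mul]
    _ = Cardinal.lift.{u + 1} lam := by rw [Cardinal.mul_eq_self hinf]
  exact absurd (Cardinal.lift_le.1 h3) (not_le.2 (Order.lt_succ lam))

lemma wd_rest (hinf : ℵ₀ ≤ lam) (hwd : WeakDiamond lam 2 (Set.Iio (Order.succ lam).ord))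
    {α : Ordinal.{u}} (hα : α < (Order.succ lam).ord) :
    WeakDiamond lam 2 {β : Ordinal.{u} | α < β ∧ β < (Order.succ lam).ord} := by
  classical
  have hne : Nonempty lam.ord.ToType := toType_ne hinf
  have hnontriv : Nontrivial lam.ord.ToType := by
    rw [← Cardinal.one_lt_iff_nontrivial, Cardinal.mk_toType, Cardinal.card_ord]
    exact one_lt_aleph0.trans_le hinf
  set i0 := Classical.arbitrary lam.ord.ToType with hi0
  obtain ⟨i1, hi1⟩ := exists_ne i0
  set T : lam.ord.ToType → Set Ordinal.{u} := fun i =>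
    if i = i0 then {β | β ≤ α ∧ β < (Order.succ lam).ord}
    else {β | α < β ∧ β < (Order.succ lam).ord} with hT
  have hcov : Set.Iio (Order.succ lam).ord ⊆ ⋃ i, T i := by
    intro β hβ
    rcases le_or_gt β α with h | h
    · exact Set.mem_iUnion.2 ⟨i0, by rw [hT]; simp only [if_pos rfl]; exact ⟨h, hβ⟩⟩
    · exact Set.mem_iUnion.2 ⟨i1, by rw [hT]; simp only [if_neg hi1]; exact ⟨h, hβ⟩⟩
  obtain ⟨i, hi⟩ := wd_iUnion hinf T (wd_mono hcov hwd)
  by_cases h : i = i0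
  · exfalso
    rw [hT, h] at hi
    simp only [if_pos rfl] at hi
    obtain ⟨x, hx1, hx2⟩ := wd_statIn hi _ (clubIn_rest hinf hα)
    exact absurd hx2.1 (not_lt.2 hx1.1)
  · rw [hT] at hi
    simp only [if_neg h] at hi
    exact hi

end WD

/-- If `Φ²_{λ⁺}(λ⁺)` holds, then there are pairwise disjoint stationary sets
`S_α ⊆ λ⁺` for `α < λ⁺` such that `Φ²_{λ⁺}(S_α)` holds for every `α < λ⁺`. -/
theorem stmt7 (lam : Cardinal.{u}) (hinf : ℵ₀ ≤ lam)
    (hwd : WD.WeakDiamond lam 2 (Set.Iio (Order.succ lam).ord)) :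
    ∃ S : Ordinal.{u} → Set Ordinal.{u},
      (∀ α < (Order.succ lam).ord, ∀ x ∈ S α, x < (Order.succ lam).ord) ∧
      (∀ α < (Order.succ lam).ord, WD.StatIn (S α) (Order.succ lam).ord) ∧
      (∀ α < (Order.succ lam).ord, ∀ β < (Order.succ lam).ord,
        α ≠ β → Disjoint (S α) (S β)) ∧
      (∀ α < (Order.succ lam).ord, WD.WeakDiamond lam 2 (S α)) := by
  classical
  open WD in
  -- the Ulam matrix
  have e : ∀ β : Ordinal.{u}, β < (Order.succ lam).ord → (Set.Iio β ↪ lam.ord.ToType) :=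
    fun β hβ => Classical.choice (WD.iio_emb hinf hβ)
  set A : lam.ord.ToType → Ordinal.{u} → Set Ordinal.{u} := fun ξ α =>
    {β | ∃ hβ : β < (Order.succ lam).ord, ∃ hab : α < β, e β hβ ⟨α, hab⟩ = ξ} with hA
  have hAsub : ∀ ξ α, A ξ α ⊆ {β : Ordinal.{u} | α < β ∧ β < (Order.succ lam).ord} := by
    rintro ξ α β ⟨hβ, hab, _⟩
    exact ⟨hab, hβ⟩
  have hAcov : ∀ α, {β : Ordinal.{u} | α < β ∧ β < (Order.succ lam).ord} ⊆ ⋃ ξ, A ξ α := by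
    rintro α β ⟨hab, hβ⟩
    exact Set.mem_iUnion.2 ⟨e β hβ ⟨α, hab⟩, hβ, hab, rfl⟩
  have hAdisj : ∀ ξ (α α' : Ordinal.{u}), α ≠ α' → ∀ x, x ∈ A ξ α → x ∈ A ξ α' → False := by
    rintro ξ α α' hne x ⟨hβ, hab, h1⟩ ⟨hβ', hab', h2⟩
    have h3 : e x hβ ⟨α', hab'⟩ = e x hβ' ⟨α', hab'⟩ := rfl
    have := (e x hβ).injective (h1.trans (h3.trans h2).symm)
    exact hne (congrArg Subtype.val this)
  -- choose a WD-positive cell in each row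
  have hrow : ∀ t : WD.Tower lam, ∃ ξ, WD.WeakDiamond lam 2 (A ξ t.1) := by
    intro t
    exact WD.wd_iUnion hinf (fun ξ => A ξ t.1)
      (WD.wd_mono (hAcov t.1) (WD.wd_rest hinf hwd t.2))
  choose ξf hξf using hrow
  obtain ⟨ξ0, ⟨j⟩⟩ := WD.pigeon hinf ξf
  refine ⟨fun α => if h : α < (Order.succ lam).ord then A ξ0 ((j ⟨α, h⟩).1).1 else ∅,
    ?_, ?_, ?_, ?_⟩
  · intro α hα x hx
    simp only [dif_pos hα] at hx
    exact (hAsub _ _ hx).2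
  · intro α hα
    simp only [dif_pos hα]
    have h1 := hξf (j ⟨α, hα⟩).1
    rw [(j ⟨α, hα⟩).2] at h1
    exact WD.wd_statIn h1
  · intro α hα β hβ hne
    rw [Set.disjoint_left]
    intro x hx1 hx2
    simp only [dif_pos hα] at hx1
    simp only [dif_pos hβ] at hx2
    refine hAdisj ξ0 _ _ ?_ x hx1 hx2
    intro hval
    apply hne
    have : (j ⟨α, hα⟩).1 = (j ⟨β, hβ⟩).1 := Subtype.ext hval
    have := j.injective (Subtype.ext this)
    exact congrArg Subtype.val this
  · intro α hα
    simp only [dif_pos hα]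
    have h1 := hξf (j ⟨α, hα⟩).1
    rwa [(j ⟨α, hα⟩).2] at h1
end
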